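/- arXiv:0709.0013 — 3 statements merged into one kernel-verified Lean document; each statement's English description precedes it below -/
import Mathlib

section
/- Let D = A + iK with A selfadjoint and K bounded selfadjoint. If H' is a closed subspace reducing D (i.e., reducing both A and K) on which the restriction of D is selfadjoint, then H' ⊆ (⋁_{t∈ℝ} e^{iAt}Ran K)^⊥. In particular, K vanishes on H'. -/
open MeasureTheory Complex

/-- If a closed subspace `H'` reduces `D = A + iK` (its orthogonal projection `P`
commutes with the unitary group of `A` and with `K`) and the restriction of `D` to `H'` is
selfadjoint (equivalently, the imaginary part of its quadratic form vanishes: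
`⟪Kx, x⟫ = 0` on `H'`), then `H' ⊆ (⋁_{t∈ℝ} e^{iAt} Ran K)ᗮ`; in particular `K` vanishes
on `H'`. -/
theorem reducing_selfadjoint_subspace_subset_perp
    {H : Type*} [NormedAddCommGroup H] [InnerProductSpace ℂ H] [CompleteSpace H]
    (U : ℝ → (H ≃ₗᵢ[ℂ] H))
    (hU0 : U 0 = LinearIsometryEquiv.refl ℂ H)
    (hUgrp : ∀ s t : ℝ, U (s + t) = (U t).trans (U s))
    (K : H →L[ℂ] H) (hK : IsSelfAdjoint K)
    (H' : Submodule ℂ H) (hclosed : IsClosed (H' : Set H))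
    (P : H →L[ℂ] H) (hPsa : IsSelfAdjoint P)
    (hPran : ∀ x : H, P x ∈ H') (hPid : ∀ x ∈ H', P x = x)
    (hPU : ∀ (t : ℝ) (x : H), P ((U t) x) = (U t) (P x))
    (hPK : ∀ x : H, P (K x) = K (P x))
    (hsa : ∀ x ∈ H', (inner ℂ (K x) x : ℂ) = 0) :
    (H' : Set H) ⊆
      (((Submodule.span ℂ (⋃ t : ℝ, (U t) '' Set.range K)).topologicalClosure)ᗮ : Submodule ℂ H)
      ∧ ∀ x ∈ H', K x = 0 := by
  -- K maps H' into H'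
  have hKmem : ∀ x ∈ H', K x ∈ H' := by
    intro x hx
    have h1 := hPK x
    rw [hPid x hx] at h1
    rw [← h1]
    exact hPran _
  -- U t maps H' into H'
  have hUmem : ∀ (t : ℝ), ∀ x ∈ H', (U t) x ∈ H' := by
    intro t x hx
    have h1 := hPU t x
    rw [hPid x hx] at h1
    rw [← h1]
    exact hPran _
  -- sesquilinear form of K vanishes on H' by polarization
  have hbil : ∀ x ∈ H', ∀ y ∈ H', (inner ℂ (K y) x : ℂ) = 0 := by
    intro x hx y hy
    have := inner_map_polarization (K : H →ₗ[ℂ] H) x y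
    simp only [ContinuousLinearMap.coe_coe] at this
    rw [this, hsa _ (H'.add_mem hx hy), hsa _ (H'.sub_mem hx hy),
      hsa _ (H'.add_mem hx (H'.smul_mem Complex.I hy)),
      hsa _ (H'.sub_mem hx (H'.smul_mem Complex.I hy))]
    ring
  -- hence K vanishes on H'
  have hK0 : ∀ x ∈ H', K x = 0 := by
    intro x hx
    have h1 := hbil (K x) (hKmem x hx) x hx
    rwa [inner_self_eq_zero] at h1
  refine ⟨?_, hK0⟩
  intro x hx
  -- group law consequences
  have hUinv : ∀ (t : ℝ) (y : H), (U t) ((U (-t)) y) = y := by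
    intro t y
    have h1 := hUgrp t (-t)
    have h2 : (U (t + -t)) y = (U t) ((U (-t)) y) := by rw [h1]; rfl
    rw [add_neg_cancel, hU0] at h2
    exact h2.symm
  -- K selfadjoint: move K across inner product
  have hKadj : ∀ a b : H, (inner ℂ (K a) b : ℂ) = inner ℂ a (K b) := by
    intro a b
    conv_lhs => rw [← hK]
    exact ContinuousLinearMap.adjoint_inner_left K b a
  -- x is orthogonal to each generator
  have hgen : ∀ u ∈ (⋃ t : ℝ, (U t) '' Set.range K), (inner ℂ u x : ℂ) = 0 := by
    intro u hu
    simp only [Set.mem_iUnion, Set.mem_image, Set.mem_range] at hu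
    obtain ⟨t, z, ⟨w, rfl⟩, rfl⟩ := hu
    have hx' : (U (-t)) x ∈ H' := hUmem _ _ hx
    calc (inner ℂ ((U t) (K w)) x : ℂ)
        = inner ℂ ((U t) (K w)) ((U t) ((U (-t)) x)) := by rw [hUinv]
      _ = inner ℂ (K w) ((U (-t)) x) := (U t).inner_map_map _ _
      _ = inner ℂ w (K ((U (-t)) x)) := hKadj _ _
      _ = 0 := by rw [hK0 _ hx', inner_zero_right]
  -- hence orthogonal to the span
  have hspan : x ∈ (Submodule.span ℂ (⋃ t : ℝ, (U t) '' Set.range K))ᗮ := by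
    rw [Submodule.mem_orthogonal]
    intro u hu
    induction hu using Submodule.span_induction with
    | mem u hu => exact hgen u hu
    | zero => exact inner_zero_left x
    | add a b _ _ ha hb => rw [inner_add_left, ha, hb, add_zero]
    | smul c a _ ha => rw [inner_smul_left, ha, mul_zero]
  -- and to the closure of the span
  have : ((Submodule.span ℂ (⋃ t : ℝ, (U t) '' Set.range K)).topologicalClosure)ᗮ
      = (Submodule.span ℂ (⋃ t : ℝ, (U t) '' Set.range K))ᗮ := by
    rw [← Submodule.orthogonal_orthogonal_eq_closure, Submodule.triorthogonal_eq_orthogonal]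
  rw [SetLike.mem_coe, this]
  exact hspan
end

section
/- Let a > 0 and let g ∈ L²(ℝ²) vanish for |q| < a. Then the function (q,x) ↦ (ℱg)(q, -xq), where ℱ is the Fourier transform in the second variable, belongs to L²(ℝ²) and its L² norm is at most a^{-1/2} times the L² norm of g. -/
open MeasureTheory Complex Real
open scoped ENNReal NNReal
set_option maxHeartbeats 1000000

lemma norm_ker (s p : ℝ) : ‖Complex.exp (-(Complex.I * s * p))‖ = 1 := by
  rw [Complex.norm_exp]; simp [Complex.exp_re]

lemma norm_ker' (s p : ℝ) : ‖Complex.exp (Complex.I * s * p)‖ = 1 := by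
  rw [Complex.norm_exp]; simp

lemma norm_coe_nonneg {r : ℝ} (hr : 0 ≤ r) : ‖(r : ℂ)‖ = r := by
  rw [Complex.norm_of_nonneg hr]

lemma gauss_bound {f : ℝ → ℂ} (hfm : StronglyMeasurable f) (hf1 : Integrable f)
    {t : ℝ} (ht : 0 < t) :
    ∫ p : ℝ, ‖∫ s : ℝ, Complex.exp (-(Complex.I * s * p)) * f s‖ ^ 2 * rexp (-t * p ^ 2)
      ≤ ∫ z : ℝ × ℝ, ‖f z.1‖ * ‖f z.2‖ *
          (Real.sqrt (π / t) * rexp (-((z.2 - z.1) ^ 2 / (4 * t)))) := by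
  set F : ℝ → ℂ := fun p => ∫ s : ℝ, Complex.exp (-(Complex.I * s * p)) * f s with hFdef
  set M : ℝ := ∫ s : ℝ, ‖f s‖ with hMdef
  set K : ℝ → ℝ := fun u => Real.sqrt (π / t) * rexp (-(u ^ 2 / (4 * t))) with hKdef
  have hK0 : ∀ u, 0 ≤ K u := fun u => by positivity
  have hFm : StronglyMeasurable F := by
    apply MeasureTheory.StronglyMeasurable.integral_prod_right'
      (f := fun w : ℝ × ℝ => Complex.exp (-(Complex.I * w.2 * w.1)) * f w.2)
    exact ((Continuous.stronglyMeasurable (by fun_prop)).mul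
      (hfm.comp_measurable (by fun_prop)))
  have hFb : ∀ p, ‖F p‖ ≤ M := by
    intro p
    refine (norm_integral_le_integral_norm _).trans (le_of_eq ?_)
    simp only [norm_mul, norm_ker, one_mul]; rfl
  set W : ℝ → ℝ × ℝ → ℂ := fun p z => (rexp (-t * p ^ 2) : ℂ) *
      ((Complex.exp (-(Complex.I * z.1 * p)) * f z.1) *
        (Complex.exp (Complex.I * z.2 * p) * (starRingEnd ℂ) (f z.2))) with hWdef
  -- pointwise identity: c p := gaussian * F p * conj (F p) equals ∫ z, W p z
  have hconj : ∀ p : ℝ, (starRingEnd ℂ) (F p) =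
      ∫ s : ℝ, Complex.exp (Complex.I * s * p) * (starRingEnd ℂ) (f s) := by
    intro p
    rw [hFdef, ← integral_conj]
    refine integral_congr_ae (Filter.Eventually.of_forall fun s => ?_)
    show (starRingEnd ℂ) (cexp (-(Complex.I * s * p)) * f s) = _
    rw [map_mul, ← Complex.exp_conj]
    congr 2
    simp
  have hcF : ∀ p : ℝ, (rexp (-t * p ^ 2) : ℂ) * (F p * (starRingEnd ℂ) (F p)) =
      ∫ z : ℝ × ℝ, W p z := by
    intro p
    rw [hconj p, hFdef]
    rw [show (volume : Measure (ℝ × ℝ)) = (volume : Measure ℝ).prod volume from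
      MeasureTheory.Measure.volume_eq_prod ℝ ℝ]
    rw [← MeasureTheory.integral_prod_mul (f := fun s : ℝ => Complex.exp (-(Complex.I * s * p)) * f s)
      (g := fun s : ℝ => Complex.exp (Complex.I * s * p) * (starRingEnd ℂ) (f s))]
    rw [← integral_const_mul]
  have hW : ∀ p : ℝ, (‖F p‖ ^ 2 * rexp (-t * p ^ 2) : ℝ) =
      ((rexp (-t * p ^ 2) : ℂ) * (F p * (starRingEnd ℂ) (F p))).re := by
    intro p
    rw [Complex.mul_conj, ← Complex.ofReal_mul, Complex.ofReal_re, Complex.normSq_eq_norm_sq]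
    ring
  -- measurability of the double integrand
  have hWm : AEStronglyMeasurable (Function.uncurry W) volume := by
    have h1 : Continuous fun w : ℝ × ℝ × ℝ => ((rexp (-t * w.1 ^ 2) : ℝ) : ℂ) := by fun_prop
    have h2 : Continuous fun w : ℝ × ℝ × ℝ => Complex.exp (-(Complex.I * w.2.1 * w.1)) := by
      fun_prop
    have h3 : Continuous fun w : ℝ × ℝ × ℝ => Complex.exp (Complex.I * w.2.2 * w.1) := by fun_prop
    have h4 : StronglyMeasurable fun w : ℝ × ℝ × ℝ => f w.2.1 :=
      hfm.comp_measurable (by fun_prop)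
    have h5 : StronglyMeasurable fun w : ℝ × ℝ × ℝ => (starRingEnd ℂ) (f w.2.2) :=
      continuous_star.comp_stronglyMeasurable (hfm.comp_measurable (by fun_prop))
    exact (h1.stronglyMeasurable.mul ((h2.stronglyMeasurable.mul h4).mul
      (h3.stronglyMeasurable.mul h5))).aestronglyMeasurable
  -- integrability of the double integrand
  have hWint : Integrable (Function.uncurry W) volume := by
    have hn : Integrable (fun z : ℝ × ℝ => ‖f z.1‖ * ‖f z.2‖) volume := by
      rw [MeasureTheory.Measure.volume_eq_prod ℝ ℝ]
      exact hf1.norm.mul_prod hf1.norm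
    have hprod : Integrable
        (fun w : ℝ × ℝ × ℝ => rexp (-t * w.1 ^ 2) * (‖f w.2.1‖ * ‖f w.2.2‖)) volume := by
      rw [MeasureTheory.Measure.volume_eq_prod ℝ (ℝ × ℝ)]
      exact (integrable_exp_neg_mul_sq ht).mul_prod hn
    refine Integrable.mono' hprod hWm (Filter.Eventually.of_forall fun w => le_of_eq ?_)
    show ‖W w.1 w.2‖ = _
    rw [hWdef]
    simp only [norm_mul, norm_ker, norm_ker', RCLike.norm_conj, one_mul,
      norm_coe_nonneg (Real.exp_pos _).le]
  -- inner p-integral via the Gaussian Fourier transform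
  have hinner : ∀ z : ℝ × ℝ, ∫ p : ℝ, W p z =
      f z.1 * (starRingEnd ℂ) (f z.2) * ((K (z.2 - z.1) : ℝ) : ℂ) := by
    intro z
    have hb : (0 : ℝ) < ((t : ℂ)).re := by simpa using ht
    have hgauss := fourierIntegral_gaussian hb ((z.2 : ℂ) - z.1)
    have hptw : ∀ p : ℝ, W p z = f z.1 * (starRingEnd ℂ) (f z.2) *
        (Complex.exp (Complex.I * ((z.2 : ℂ) - z.1) * p) *
          Complex.exp (-(t : ℂ) * (p : ℂ) ^ 2)) := by
      intro p
      rw [hWdef]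
      show ((rexp (-t * p ^ 2) : ℝ) : ℂ) * _ = _
      rw [show Complex.I * ((z.2 : ℂ) - z.1) * p = Complex.I * z.2 * p + -(Complex.I * z.1 * p)
        by ring, Complex.exp_add,
        show ((rexp (-t * p ^ 2) : ℝ) : ℂ) = Complex.exp (-(t : ℂ) * (p : ℂ) ^ 2) by
          push_cast; ring_nf]
      ring
    rw [integral_congr_ae (Filter.Eventually.of_forall hptw), integral_const_mul, hgauss]
    congr 1
    have h1 : ((π : ℂ) / (t : ℂ)) ^ (1 / 2 : ℂ) = ((Real.sqrt (π / t) : ℝ) : ℂ) := by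
      rw [show ((π : ℂ) / (t : ℂ)) = ((π / t : ℝ) : ℂ) by push_cast; ring,
        show (1 / 2 : ℂ) = ((1 / 2 : ℝ) : ℂ) by norm_num,
        ← Complex.ofReal_cpow (by positivity) (1 / 2 : ℝ), Real.sqrt_eq_rpow]
    have h2 : Complex.exp (-(((z.2 : ℂ)) - z.1) ^ 2 / (4 * (t : ℂ))) =
        ((rexp (-((z.2 - z.1) ^ 2 / (4 * t))) : ℝ) : ℂ) := by push_cast; ring_nf
    rw [h1, h2, hKdef]
    push_cast
    ring
  -- swap the two integrals
  have hWint' : Integrable (Function.uncurry W)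
      ((volume : Measure ℝ).prod (volume : Measure (ℝ × ℝ))) := by
    rw [← MeasureTheory.Measure.volume_eq_prod]; exact hWint
  have hswap : ∫ p : ℝ, ∫ z : ℝ × ℝ, W p z = ∫ z : ℝ × ℝ, ∫ p : ℝ, W p z :=
    integral_integral_swap hWint'
  -- integrability of the single complex integrand in p
  have hCm : AEStronglyMeasurable
      (fun p : ℝ => ((rexp (-t * p ^ 2) : ℝ) : ℂ) * (F p * (starRingEnd ℂ) (F p))) volume :=
    ((Continuous.stronglyMeasurable (by fun_prop : Continuous fun p : ℝ =>
        ((rexp (-t * p ^ 2) : ℝ) : ℂ))).mul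
      (hFm.mul (continuous_star.comp_stronglyMeasurable hFm))).aestronglyMeasurable
  have hCint : Integrable
      (fun p : ℝ => ((rexp (-t * p ^ 2) : ℝ) : ℂ) * (F p * (starRingEnd ℂ) (F p))) := by
    refine Integrable.mono' ((integrable_exp_neg_mul_sq ht).const_mul (M ^ 2)) hCm
      (Filter.Eventually.of_forall fun p => ?_)
    have hFp := hFb p
    have h0 := norm_nonneg (F p)
    simp only [norm_mul, RCLike.norm_conj, norm_coe_nonneg (Real.exp_pos _).le]
    have hMM : ‖F p‖ * ‖F p‖ ≤ M ^ 2 := by nlinarith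
    exact le_trans (mul_le_mul_of_nonneg_left hMM (Real.exp_pos _).le)
      (le_of_eq (mul_comm _ _))
  -- put everything together
  have hEre : ∫ p : ℝ, ‖F p‖ ^ 2 * rexp (-t * p ^ 2) =
      (∫ z : ℝ × ℝ, f z.1 * (starRingEnd ℂ) (f z.2) * ((K (z.2 - z.1) : ℝ) : ℂ)).re := by
    rw [integral_congr_ae (Filter.Eventually.of_forall hW)]
    have hre := ContinuousLinearMap.integral_comp_comm Complex.reCLM hCint
    simp only [Complex.reCLM_apply] at hre
    rw [hre]
    congr 1
    rw [integral_congr_ae (Filter.Eventually.of_forall hcF), hswap,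
      integral_congr_ae (Filter.Eventually.of_forall hinner)]
  rw [hEre]
  refine (Complex.re_le_norm _).trans ?_
  refine (norm_integral_le_integral_norm _).trans (le_of_eq ?_)
  refine integral_congr_ae (Filter.Eventually.of_forall fun z => ?_)
  rw [hKdef]
  simp only [norm_mul, RCLike.norm_conj]
  rw [norm_coe_nonneg (by positivity)]

lemma ft_meas {f : ℝ × ℝ → ℂ} (hf : StronglyMeasurable f) :
    StronglyMeasurable (fun qp : ℝ × ℝ =>
      ∫ s : ℝ, Complex.exp (-(Complex.I * s * qp.2)) * f (qp.1, s)) := by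
  apply MeasureTheory.StronglyMeasurable.integral_prod_right'
    (f := fun w : (ℝ × ℝ) × ℝ => Complex.exp (-(Complex.I * w.2 * w.1.2)) * f (w.1.1, w.2))
  exact (Continuous.stronglyMeasurable (by fun_prop)).mul (hf.comp_measurable (by fun_prop))

lemma plancherel_le {f : ℝ → ℂ} (hfm : StronglyMeasurable f) (hf1 : Integrable f) :
    ∫⁻ p : ℝ, ENNReal.ofReal (‖∫ s : ℝ, Complex.exp (-(Complex.I * s * p)) * f s‖ ^ 2) ≤
      ENNReal.ofReal (2 * π) * ∫⁻ s : ℝ, ENNReal.ofReal (‖f s‖ ^ 2) := by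
  set R2 : ℝ≥0∞ := ∫⁻ s : ℝ, ENNReal.ofReal (‖f s‖ ^ 2) with hR2def
  by_cases hR : R2 = ⊤
  · rw [hR, ENNReal.mul_top (ENNReal.ofReal_pos.mpr (by positivity)).ne']
    exact le_top
  set F : ℝ → ℂ := fun p => ∫ s : ℝ, Complex.exp (-(Complex.I * s * p)) * f s with hFdef
  set M : ℝ := ∫ s : ℝ, ‖f s‖ with hMdef
  have hFm : StronglyMeasurable F := by
    apply MeasureTheory.StronglyMeasurable.integral_prod_right'
      (f := fun w : ℝ × ℝ => Complex.exp (-(Complex.I * w.2 * w.1)) * f w.2)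
    exact ((Continuous.stronglyMeasurable (by fun_prop)).mul
      (hfm.comp_measurable (by fun_prop)))
  have hFb : ∀ p, ‖F p‖ ≤ M := by
    intro p
    refine (norm_integral_le_integral_norm _).trans (le_of_eq ?_)
    simp only [norm_mul, norm_ker, one_mul]; rfl
  have hM0 : 0 ≤ M := by rw [hMdef]; positivity
  have key_t : ∀ t : ℝ, 0 < t →
      ∫⁻ p : ℝ, ENNReal.ofReal (‖F p‖ ^ 2 * rexp (-t * p ^ 2)) ≤
        ENNReal.ofReal (2 * π) * R2 := by
    intro t ht
    have hDcont : Continuous fun u : ℝ => Real.sqrt (π / t) * rexp (-(u ^ 2 / (4 * t))) := by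
      fun_prop
    have hD0 : ∀ u : ℝ, 0 ≤ Real.sqrt (π / t) * rexp (-(u ^ 2 / (4 * t))) := fun u => by
      positivity
    have hDint : Integrable (fun u : ℝ => Real.sqrt (π / t) * rexp (-(u ^ 2 / (4 * t)))) := by
      have h : Integrable (fun u : ℝ => rexp (-(1 / (4 * t)) * u ^ 2)) :=
        integrable_exp_neg_mul_sq (by positivity)
      refine (h.const_mul (Real.sqrt (π / t))).congr (Filter.Eventually.of_forall fun u => ?_)
      simp only
      rw [show -(1 / (4 * t)) * u ^ 2 = -(u ^ 2 / (4 * t)) by ring]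
    have hDtot : ∫ u : ℝ, Real.sqrt (π / t) * rexp (-(u ^ 2 / (4 * t))) = 2 * π := by
      have h : ∫ u : ℝ, Real.sqrt (π / t) * rexp (-(u ^ 2 / (4 * t)))
          = ∫ u : ℝ, Real.sqrt (π / t) * rexp (-(1 / (4 * t)) * u ^ 2) := by
        refine integral_congr_ae (Filter.Eventually.of_forall fun u => ?_)
        simp only
        rw [show -(1 / (4 * t)) * u ^ 2 = -(u ^ 2 / (4 * t)) by ring]
      rw [h, integral_const_mul, integral_gaussian, ← Real.sqrt_mul (by positivity),
        show (π / t) * (π / (1 / (4 * t))) = (2 * π) ^ 2 by field_simp; ring,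
        Real.sqrt_sq (by positivity)]
    have hlD : ∫⁻ u : ℝ, ENNReal.ofReal (Real.sqrt (π / t) * rexp (-(u ^ 2 / (4 * t))))
        = ENNReal.ofReal (2 * π) := by
      rw [← ofReal_integral_eq_lintegral_ofReal hDint (Filter.Eventually.of_forall hD0), hDtot]
    -- the Bochner integral of the cutoff integrand
    have hInt : Integrable (fun p : ℝ => ‖F p‖ ^ 2 * rexp (-t * p ^ 2)) := by
      refine Integrable.mono' ((integrable_exp_neg_mul_sq ht).const_mul (M ^ 2))
        ((((hFm.measurable.norm).pow_const 2).mul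
          (Continuous.measurable (by fun_prop))).aestronglyMeasurable)
        (Filter.Eventually.of_forall fun p => ?_)
      rw [Real.norm_eq_abs, _root_.abs_of_nonneg (by positivity)]
      have hMM : ‖F p‖ ^ 2 ≤ M ^ 2 := by nlinarith [hFb p, norm_nonneg (F p)]
      exact mul_le_mul_of_nonneg_right hMM (Real.exp_pos _).le
    rw [← ofReal_integral_eq_lintegral_ofReal hInt
      (Filter.Eventually.of_forall fun p => by positivity)]
    refine le_trans (ENNReal.ofReal_le_ofReal (gauss_bound hfm hf1 ht)) ?_
    -- now a pure lintegral estimate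
    have hNnn : 0 ≤ᵐ[(volume : Measure (ℝ × ℝ))] fun z : ℝ × ℝ =>
        ‖f z.1‖ * ‖f z.2‖ * (Real.sqrt (π / t) * rexp (-((z.2 - z.1) ^ 2 / (4 * t)))) :=
      Filter.Eventually.of_forall fun z => by positivity
    have hNm : AEStronglyMeasurable (fun z : ℝ × ℝ =>
        ‖f z.1‖ * ‖f z.2‖ * (Real.sqrt (π / t) * rexp (-((z.2 - z.1) ^ 2 / (4 * t)))))
        (volume : Measure (ℝ × ℝ)) := by
      refine Measurable.aestronglyMeasurable ?_
      exact ((hfm.measurable.norm.comp measurable_fst).mul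
        (hfm.measurable.norm.comp measurable_snd)).mul
        ((hDcont.measurable).comp (measurable_snd.sub measurable_fst))
    rw [integral_eq_lintegral_of_nonneg_ae hNnn hNm]
    refine le_trans ENNReal.ofReal_toReal_le ?_
    -- measurable pieces
    have hmeas1 : Measurable fun z : ℝ × ℝ =>
        ENNReal.ofReal (‖f z.1‖ ^ 2 * (Real.sqrt (π / t) * rexp (-((z.2 - z.1) ^ 2 / (4 * t))))) :=
      (((hfm.measurable.norm.comp measurable_fst).pow_const 2).mul
        ((hDcont.measurable).comp (measurable_snd.sub measurable_fst))).ennreal_ofReal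
    have hmeas2 : Measurable fun z : ℝ × ℝ =>
        ENNReal.ofReal (‖f z.2‖ ^ 2 * (Real.sqrt (π / t) * rexp (-((z.2 - z.1) ^ 2 / (4 * t))))) :=
      (((hfm.measurable.norm.comp measurable_snd).pow_const 2).mul
        ((hDcont.measurable).comp (measurable_snd.sub measurable_fst))).ennreal_ofReal
    have hmeasN : Measurable fun z : ℝ × ℝ =>
        ENNReal.ofReal (‖f z.1‖ * ‖f z.2‖ *
          (Real.sqrt (π / t) * rexp (-((z.2 - z.1) ^ 2 / (4 * t))))) :=
      (((hfm.measurable.norm.comp measurable_fst).mul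
        (hfm.measurable.norm.comp measurable_snd)).mul
        ((hDcont.measurable).comp (measurable_snd.sub measurable_fst))).ennreal_ofReal
    -- T1
    have hT1 : ∫⁻ z : ℝ × ℝ, ENNReal.ofReal
          (‖f z.1‖ ^ 2 * (Real.sqrt (π / t) * rexp (-((z.2 - z.1) ^ 2 / (4 * t)))))
        = ENNReal.ofReal (2 * π) * R2 := by
      rw [MeasureTheory.Measure.volume_eq_prod ℝ ℝ, lintegral_prod _ hmeas1.aemeasurable]
      have hx : ∀ x : ℝ, ∫⁻ y : ℝ, ENNReal.ofReal
            (‖f x‖ ^ 2 * (Real.sqrt (π / t) * rexp (-((y - x) ^ 2 / (4 * t)))))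
          = ENNReal.ofReal (‖f x‖ ^ 2) * ENNReal.ofReal (2 * π) := by
        intro x
        have : ∀ y : ℝ, ENNReal.ofReal
              (‖f x‖ ^ 2 * (Real.sqrt (π / t) * rexp (-((y - x) ^ 2 / (4 * t)))))
            = ENNReal.ofReal (‖f x‖ ^ 2) *
              ENNReal.ofReal (Real.sqrt (π / t) * rexp (-((y - x) ^ 2 / (4 * t)))) := fun y =>
          ENNReal.ofReal_mul (by positivity)
        simp only [this]
        rw [lintegral_const_mul _ (Measurable.ennreal_ofReal (by fun_prop :
          Measurable fun y : ℝ => Real.sqrt (π / t) * rexp (-((y - x) ^ 2 / (4 * t)))))]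
        congr 1
        have := lintegral_add_right_eq_self (μ := (volume : Measure ℝ))
          (fun u : ℝ => ENNReal.ofReal (Real.sqrt (π / t) * rexp (-(u ^ 2 / (4 * t))))) (-x)
        simp only [sub_eq_add_neg]
        rw [this, hlD]
      simp only [hx]
      rw [lintegral_mul_const _ ((hfm.measurable.norm.pow_const 2).ennreal_ofReal),
        mul_comm]
    -- T2
    have hT2 : ∫⁻ z : ℝ × ℝ, ENNReal.ofReal
          (‖f z.2‖ ^ 2 * (Real.sqrt (π / t) * rexp (-((z.2 - z.1) ^ 2 / (4 * t)))))
        = ENNReal.ofReal (2 * π) * R2 := by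
      rw [MeasureTheory.Measure.volume_eq_prod ℝ ℝ, lintegral_prod_symm _ hmeas2.aemeasurable]
      have hy : ∀ y : ℝ, ∫⁻ x : ℝ, ENNReal.ofReal
            (‖f y‖ ^ 2 * (Real.sqrt (π / t) * rexp (-((y - x) ^ 2 / (4 * t)))))
          = ENNReal.ofReal (‖f y‖ ^ 2) * ENNReal.ofReal (2 * π) := by
        intro y
        have : ∀ x : ℝ, ENNReal.ofReal
              (‖f y‖ ^ 2 * (Real.sqrt (π / t) * rexp (-((y - x) ^ 2 / (4 * t)))))
            = ENNReal.ofReal (‖f y‖ ^ 2) *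
              ENNReal.ofReal (Real.sqrt (π / t) * rexp (-((x + -y) ^ 2 / (4 * t)))) := by
          intro x
          rw [show ((y - x) ^ 2 : ℝ) = (x + -y) ^ 2 by ring]
          exact ENNReal.ofReal_mul (by positivity)
        simp only [this]
        rw [lintegral_const_mul _ (Measurable.ennreal_ofReal (by fun_prop :
          Measurable fun x : ℝ => Real.sqrt (π / t) * rexp (-((x + -y) ^ 2 / (4 * t)))))]
        congr 1
        have := lintegral_add_right_eq_self (μ := (volume : Measure ℝ))
          (fun u : ℝ => ENNReal.ofReal (Real.sqrt (π / t) * rexp (-(u ^ 2 / (4 * t))))) (-y)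
        rw [this, hlD]
      simp only [hy]
      rw [lintegral_mul_const _ ((hfm.measurable.norm.pow_const 2).ennreal_ofReal),
        mul_comm]
    -- AM-GM and combine
    have hAM : ∀ z : ℝ × ℝ, (2 : ℝ≥0∞) * ENNReal.ofReal (‖f z.1‖ * ‖f z.2‖ *
          (Real.sqrt (π / t) * rexp (-((z.2 - z.1) ^ 2 / (4 * t)))))
        ≤ ENNReal.ofReal (‖f z.1‖ ^ 2 * (Real.sqrt (π / t) * rexp (-((z.2 - z.1) ^ 2 / (4 * t)))))
          + ENNReal.ofReal (‖f z.2‖ ^ 2 *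
            (Real.sqrt (π / t) * rexp (-((z.2 - z.1) ^ 2 / (4 * t))))) := by
      intro z
      rw [show (2 : ℝ≥0∞) = ENNReal.ofReal (2 : ℝ) by simp,
        ← ENNReal.ofReal_mul (by norm_num), ← ENNReal.ofReal_add (by positivity) (by positivity)]
      refine ENNReal.ofReal_le_ofReal ?_
      nlinarith [sq_nonneg (‖f z.1‖ - ‖f z.2‖), hD0 (z.2 - z.1),
        mul_nonneg (mul_nonneg (norm_nonneg (f z.1)) (norm_nonneg (f z.2))) (hD0 (z.2 - z.1)),
        sq_nonneg (‖f z.1‖ + ‖f z.2‖)]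
    have h2le : (2 : ℝ≥0∞) * ∫⁻ z : ℝ × ℝ, ENNReal.ofReal (‖f z.1‖ * ‖f z.2‖ *
          (Real.sqrt (π / t) * rexp (-((z.2 - z.1) ^ 2 / (4 * t)))))
        ≤ (2 : ℝ≥0∞) * (ENNReal.ofReal (2 * π) * R2) := by
      rw [← lintegral_const_mul _ hmeasN]
      calc ∫⁻ z : ℝ × ℝ, (2 : ℝ≥0∞) * ENNReal.ofReal (‖f z.1‖ * ‖f z.2‖ *
              (Real.sqrt (π / t) * rexp (-((z.2 - z.1) ^ 2 / (4 * t)))))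
          ≤ ∫⁻ z : ℝ × ℝ,
              (ENNReal.ofReal (‖f z.1‖ ^ 2 *
                (Real.sqrt (π / t) * rexp (-((z.2 - z.1) ^ 2 / (4 * t)))))
              + ENNReal.ofReal (‖f z.2‖ ^ 2 *
                (Real.sqrt (π / t) * rexp (-((z.2 - z.1) ^ 2 / (4 * t)))))) :=
            lintegral_mono hAM
        _ = ENNReal.ofReal (2 * π) * R2 + ENNReal.ofReal (2 * π) * R2 := by
            rw [lintegral_add_left hmeas1, hT1, hT2]
        _ = (2 : ℝ≥0∞) * (ENNReal.ofReal (2 * π) * R2) := by ring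
    exact (ENNReal.mul_le_mul_iff_right (two_ne_zero) ENNReal.ofNat_ne_top).mp h2le
  -- monotone convergence in the cutoff parameter
  have hFnm : ∀ n : ℕ, AEMeasurable (fun p : ℝ =>
      ENNReal.ofReal (‖F p‖ ^ 2 * rexp (-(1 / ((n : ℝ) + 1)) * p ^ 2))) volume := fun n =>
    ((((hFm.measurable.norm).pow_const 2).mul
      (Continuous.measurable (by fun_prop))).ennreal_ofReal).aemeasurable
  have hmono : ∀ᵐ p : ℝ ∂(volume : Measure ℝ), Monotone fun n : ℕ =>
      ENNReal.ofReal (‖F p‖ ^ 2 * rexp (-(1 / ((n : ℝ) + 1)) * p ^ 2)) := by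
    refine Filter.Eventually.of_forall fun p m n hmn => ?_
    refine ENNReal.ofReal_le_ofReal ?_
    refine mul_le_mul_of_nonneg_left ?_ (by positivity)
    refine Real.exp_le_exp.mpr ?_
    have h1 : (1 : ℝ) / ((n : ℝ) + 1) ≤ 1 / ((m : ℝ) + 1) := by
      apply one_div_le_one_div_of_le (by positivity)
      have : (m : ℝ) ≤ (n : ℝ) := by exact_mod_cast hmn
      linarith
    nlinarith [sq_nonneg p]
  have htend : ∀ᵐ p : ℝ ∂(volume : Measure ℝ), Filter.Tendsto (fun n : ℕ =>
      ENNReal.ofReal (‖F p‖ ^ 2 * rexp (-(1 / ((n : ℝ) + 1)) * p ^ 2))) Filter.atTop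
      (nhds (ENNReal.ofReal (‖F p‖ ^ 2))) := by
    refine Filter.Eventually.of_forall fun p => ?_
    have h0 : Filter.Tendsto (fun n : ℕ => (1 : ℝ) / ((n : ℝ) + 1)) Filter.atTop (nhds 0) :=
      tendsto_one_div_add_atTop_nhds_zero_nat
    have h1 : Filter.Tendsto (fun n : ℕ => ‖F p‖ ^ 2 * rexp (-(1 / ((n : ℝ) + 1)) * p ^ 2))
        Filter.atTop (nhds (‖F p‖ ^ 2 * rexp (-(0 : ℝ) * p ^ 2))) :=
      ((Real.continuous_exp.tendsto _).comp ((h0.neg).mul_const (p ^ 2))).const_mul _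
    have h2 := (ENNReal.continuous_ofReal.tendsto _).comp h1
    simpa [Function.comp_def] using h2
  have hcv := lintegral_tendsto_of_tendsto_of_monotone hFnm hmono htend
  exact le_of_tendsto' hcv fun n => key_t _ (by positivity)

lemma ae_comp_fst {p : ℝ → Prop} (h : ∀ᵐ q : ℝ ∂(volume : Measure ℝ), p q) :
    ∀ᵐ z : ℝ × ℝ ∂(volume : Measure (ℝ × ℝ)), p z.1 := by
  rw [MeasureTheory.Measure.volume_eq_prod ℝ ℝ, Filter.eventually_iff, mem_ae_iff]
  apply measure_mono_null
    (show {z : ℝ × ℝ | ¬ p z.1} ⊆ {q : ℝ | ¬ p q} ×ˢ (Set.univ : Set ℝ) from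
      fun z hz => ⟨hz, trivial⟩)
  rw [MeasureTheory.Measure.prod_prod]
  have h0 : (volume : Measure ℝ) {q : ℝ | ¬ p q} = 0 := MeasureTheory.ae_iff.mp h
  rw [h0, zero_mul]

lemma ofReal_sq_eq_nnnorm (x : ℂ) :
    ENNReal.ofReal (‖x‖ ^ 2) = (‖x‖₊ : ℝ≥0∞) ^ (2 : ℝ) := by
  rw [ENNReal.ofReal_pow (norm_nonneg _), ofReal_norm, enorm_eq_nnnorm,
    ← ENNReal.rpow_natCast]
  norm_num


/-- if `g ∈ L²(ℝ²)` vanishes for `|q| < a` and `G` is the Fourier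
transform of `g` in the second variable, then `(q,x) ↦ G(q, -xq)` is in `L²(ℝ²)`
with squared norm at most `a⁻¹` times the squared norm of `g`. -/
theorem fourier_substitution_bound (a : ℝ) (ha : 0 < a)
    (g : ℝ × ℝ → ℂ) (hg : MemLp g 2 (volume : Measure (ℝ × ℝ)))
    (hg1 : ∀ q : ℝ, Integrable (fun s => g (q, s)))
    (hsupp : ∀ᵐ z : ℝ × ℝ, |z.1| < a → g z = 0)
    (G : ℝ × ℝ → ℂ)
    (hG : ∀ q p : ℝ, G (q, p) =
      ((Real.sqrt (2 * π) : ℝ) : ℂ)⁻¹ * ∫ s : ℝ, Complex.exp (-(Complex.I * s * p)) * g (q, s)) :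
    MemLp (fun z : ℝ × ℝ => G (z.1, -z.2 * z.1)) 2 (volume : Measure (ℝ × ℝ)) ∧
    ∫⁻ z : ℝ × ℝ, ENNReal.ofReal (‖G (z.1, -z.2 * z.1)‖ ^ 2) ≤
      ENNReal.ofReal a⁻¹ * ∫⁻ z : ℝ × ℝ, ENNReal.ofReal (‖g z‖ ^ 2) := by
  have hgm := hg.1
  set gt : ℝ × ℝ → ℂ := hgm.mk g with hgtdef
  have hgsm : StronglyMeasurable gt := hgm.stronglyMeasurable_mk
  have hgg : g =ᵐ[(volume : Measure (ℝ × ℝ))] gt := hgm.ae_eq_mk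
  set H : ℝ × ℝ → ℂ := fun qp => ((Real.sqrt (2 * π) : ℝ) : ℂ)⁻¹ *
      ∫ s : ℝ, Complex.exp (-(Complex.I * s * qp.2)) * gt (qp.1, s) with hHdef
  have hHm : StronglyMeasurable H := stronglyMeasurable_const.mul (ft_meas hgsm)
  have hgg' : ∀ᵐ q : ℝ ∂(volume : Measure ℝ),
      (fun s => g (q, s)) =ᵐ[(volume : Measure ℝ)] fun s => gt (q, s) := by
    have h := hgg
    rw [MeasureTheory.Measure.volume_eq_prod ℝ ℝ] at h
    exact MeasureTheory.Measure.ae_ae_of_ae_prod h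
  have hsupp' : ∀ᵐ q : ℝ ∂(volume : Measure ℝ), ∀ᵐ s : ℝ ∂(volume : Measure ℝ),
      |q| < a → g (q, s) = 0 := by
    have h := hsupp
    rw [MeasureTheory.Measure.volume_eq_prod ℝ ℝ] at h
    exact MeasureTheory.Measure.ae_ae_of_ae_prod h
  have hmain : ∀ᵐ q : ℝ ∂(volume : Measure ℝ),
      (∀ p : ℝ, G (q, p) = H (q, p)) ∧
      ∫⁻ x : ℝ, ENNReal.ofReal (‖H (q, -x * q)‖ ^ 2)
        ≤ ENNReal.ofReal a⁻¹ * ∫⁻ s : ℝ, ENNReal.ofReal (‖g (q, s)‖ ^ 2) := by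
    filter_upwards [hgg', hsupp'] with q hq1 hq2
    have hGq : ∀ p : ℝ, G (q, p) = H (q, p) := by
      intro p
      rw [hG q p, hHdef]
      simp only
      congr 1
      exact integral_congr_ae (hq1.mono fun s hs => by dsimp only at hs ⊢; rw [hs])
    refine ⟨hGq, ?_⟩
    have hgtint : Integrable (fun s => gt (q, s)) := (hg1 q).congr hq1
    have hgtm : StronglyMeasurable fun s => gt (q, s) :=
      hgsm.comp_measurable measurable_prodMk_left
    have hl2eq : ∫⁻ s : ℝ, ENNReal.ofReal (‖gt (q, s)‖ ^ 2)
        = ∫⁻ s : ℝ, ENNReal.ofReal (‖g (q, s)‖ ^ 2) :=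
      lintegral_congr_ae (hq1.mono fun s hs => by dsimp only at hs ⊢; rw [hs])
    by_cases hqa : |q| < a
    · have hz : ∀ p : ℝ, H (q, p) = 0 := by
        intro p
        rw [hHdef]
        simp only
        have h0 : (fun s : ℝ => Complex.exp (-(Complex.I * s * p)) * gt (q, s))
            =ᵐ[(volume : Measure ℝ)] fun _ => (0 : ℂ) := by
          filter_upwards [hq1, hq2] with s h1 h2
          rw [← h1, h2 hqa, mul_zero]
        rw [integral_congr_ae h0, integral_zero, mul_zero]
      simp only [hz]
      simp
    · push_neg at hqa
      have hq0 : q ≠ 0 := by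
        intro h
        rw [h] at hqa
        simp at hqa
        linarith
      have hHqm : Measurable fun p : ℝ => ENNReal.ofReal (‖H (q, p)‖ ^ 2) :=
        (((hHm.comp_measurable measurable_prodMk_left).measurable.norm).pow_const
          2).ennreal_ofReal
      have hcov : ∫⁻ x : ℝ, ENNReal.ofReal (‖H (q, -x * q)‖ ^ 2)
          = ENNReal.ofReal |(-q)⁻¹| * ∫⁻ p : ℝ, ENNReal.ofReal (‖H (q, p)‖ ^ 2) := by
        have h1 : ∀ x : ℝ, (-x * q : ℝ) = (-q) * x := fun x => by ring
        simp only [h1]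
        rw [← lintegral_map hHqm (measurable_const_mul (-q)),
          Real.map_volume_mul_left (neg_ne_zero.mpr hq0), lintegral_smul_measure, smul_eq_mul]
      have hFTm : Measurable fun p : ℝ => ENNReal.ofReal
          (‖∫ s : ℝ, Complex.exp (-(Complex.I * s * p)) * gt (q, s)‖ ^ 2) :=
        ((((ft_meas hgsm).comp_measurable measurable_prodMk_left).measurable.norm).pow_const
          2).ennreal_ofReal
      have hHval : ∀ p : ℝ, ENNReal.ofReal (‖H (q, p)‖ ^ 2) = ENNReal.ofReal (2 * π)⁻¹ *
          ENNReal.ofReal (‖∫ s : ℝ, Complex.exp (-(Complex.I * s * p)) * gt (q, s)‖ ^ 2) := by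
        intro p
        rw [hHdef]
        simp only
        rw [norm_mul, mul_pow, ← ENNReal.ofReal_mul (by positivity)]
        congr 2
        rw [norm_inv, norm_coe_nonneg (Real.sqrt_nonneg _), inv_pow,
          Real.sq_sqrt (by positivity)]
      have hint2 : ∫⁻ p : ℝ, ENNReal.ofReal (‖H (q, p)‖ ^ 2)
          ≤ ∫⁻ s : ℝ, ENNReal.ofReal (‖gt (q, s)‖ ^ 2) := by
        calc ∫⁻ p : ℝ, ENNReal.ofReal (‖H (q, p)‖ ^ 2)
            = ENNReal.ofReal (2 * π)⁻¹ * ∫⁻ p : ℝ, ENNReal.ofReal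
              (‖∫ s : ℝ, Complex.exp (-(Complex.I * s * p)) * gt (q, s)‖ ^ 2) := by
              simp only [hHval]
              rw [lintegral_const_mul _ hFTm]
          _ ≤ ENNReal.ofReal (2 * π)⁻¹ * (ENNReal.ofReal (2 * π) *
              ∫⁻ s : ℝ, ENNReal.ofReal (‖gt (q, s)‖ ^ 2)) :=
              mul_le_mul_right (plancherel_le hgtm hgtint) _
          _ = ∫⁻ s : ℝ, ENNReal.ofReal (‖gt (q, s)‖ ^ 2) := by
              rw [← mul_assoc, ← ENNReal.ofReal_mul (by positivity),
                inv_mul_cancel₀ (by positivity), ENNReal.ofReal_one, one_mul]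
      rw [hcov, ← hl2eq]
      refine mul_le_mul' (ENNReal.ofReal_le_ofReal ?_) hint2
      rw [abs_inv, abs_neg]
      exact inv_anti₀ ha hqa
  have hGH_ae : (fun z : ℝ × ℝ => G (z.1, -z.2 * z.1))
      =ᵐ[(volume : Measure (ℝ × ℝ))] fun z => H (z.1, -z.2 * z.1) := by
    have h := ae_comp_fst (hmain.mono fun q hq => hq.1)
    exact h.mono fun z hz => hz _
  have hHcm : StronglyMeasurable fun z : ℝ × ℝ => H (z.1, -z.2 * z.1) :=
    hHm.comp_measurable (by fun_prop)
  have hmeasG : Measurable fun z : ℝ × ℝ => ENNReal.ofReal (‖H (z.1, -z.2 * z.1)‖ ^ 2) :=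
    ((hHcm.measurable.norm).pow_const 2).ennreal_ofReal
  have hLHS : ∫⁻ z : ℝ × ℝ, ENNReal.ofReal (‖G (z.1, -z.2 * z.1)‖ ^ 2)
      = ∫⁻ z : ℝ × ℝ, ENNReal.ofReal (‖H (z.1, -z.2 * z.1)‖ ^ 2) :=
    lintegral_congr_ae (hGH_ae.mono fun z hz => by dsimp only at hz ⊢; rw [hz])
  have hgtmeas : Measurable fun z : ℝ × ℝ => ENNReal.ofReal (‖gt z‖ ^ 2) :=
    ((hgsm.measurable.norm).pow_const 2).ennreal_ofReal
  have hgmeas : AEMeasurable (fun z : ℝ × ℝ => ENNReal.ofReal (‖g z‖ ^ 2))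
      (volume : Measure (ℝ × ℝ)) :=
    ⟨_, hgtmeas, hgg.mono fun z hz => by dsimp only; rw [hz]⟩
  have hineq : ∫⁻ z : ℝ × ℝ, ENNReal.ofReal (‖G (z.1, -z.2 * z.1)‖ ^ 2) ≤
      ENNReal.ofReal a⁻¹ * ∫⁻ z : ℝ × ℝ, ENNReal.ofReal (‖g z‖ ^ 2) := by
    rw [hLHS, MeasureTheory.Measure.volume_eq_prod ℝ ℝ,
      lintegral_prod _ hmeasG.aemeasurable]
    calc ∫⁻ q : ℝ, ∫⁻ x : ℝ, ENNReal.ofReal (‖H (q, -x * q)‖ ^ 2)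
        ≤ ∫⁻ q : ℝ, ENNReal.ofReal a⁻¹ * ∫⁻ s : ℝ, ENNReal.ofReal (‖g (q, s)‖ ^ 2) :=
          lintegral_mono_ae (hmain.mono fun q hq => hq.2)
      _ = ENNReal.ofReal a⁻¹ * ∫⁻ q : ℝ, ∫⁻ s : ℝ, ENNReal.ofReal (‖g (q, s)‖ ^ 2) :=
          lintegral_const_mul' _ _ ENNReal.ofReal_ne_top
      _ = ENNReal.ofReal a⁻¹ * ∫⁻ z : ℝ × ℝ, ENNReal.ofReal (‖g z‖ ^ 2) := by
          congr 1
          rw [MeasureTheory.Measure.volume_eq_prod ℝ ℝ] at hgmeas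
          rw [MeasureTheory.Measure.volume_eq_prod ℝ ℝ, lintegral_prod _ hgmeas]
  refine ⟨⟨hHcm.aestronglyMeasurable.congr hGH_ae.symm, ?_⟩, hineq⟩
  rw [eLpNorm_lt_top_iff_lintegral_rpow_enorm_lt_top (by norm_num) (by norm_num)]
  have hconv : ∀ (f : ℝ × ℝ → ℂ), ∫⁻ z : ℝ × ℝ, ‖f z‖ₑ ^ (2 : ℝ≥0∞).toReal
      = ∫⁻ z : ℝ × ℝ, ENNReal.ofReal (‖f z‖ ^ 2) := by
    intro f
    refine lintegral_congr fun z => ?_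
    rw [ofReal_sq_eq_nnnorm, enorm_eq_nnnorm]
    norm_num
  rw [hconv]
  refine lt_of_le_of_lt hineq (ENNReal.mul_lt_top ENNReal.ofReal_lt_top ?_)
  have h2 := lintegral_rpow_enorm_lt_top_of_eLpNorm_lt_top (p := (2 : ℝ≥0∞))
    (by norm_num) (by norm_num) hg.2
  rw [hconv] at h2
  exact h2
end

section
/- For the function w(z) = 1/(1 - √((z-1)/(z+1))) with the branch of the square root analytic off (-∞,-1]∪[1,∞) and satisfying Im √((z-1)/(z+1)) > 0, the following asymptotics hold uniformly in arg z as |z| → ∞: w(z) = z + O(1) for Im z > 0, and w(z) = O(1) for Im z < 0. -/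
open Complex

/-- for `w(z) = 1/(1 - √((z-1)/(z+1)))` with the branch of the square
root analytic off `(-∞,-1] ∪ [1,∞)` and `Im √((z-1)/(z+1)) > 0`, uniformly in `arg z`
as `|z| → ∞`: `w(z) = z + O(1)` for `Im z > 0` and `w(z) = O(1)` for `Im z < 0`. -/
theorem w_asymptotics (sq : ℂ → ℂ)
    (hsqan : DifferentiableOn ℂ sq {z : ℂ | ¬(z.im = 0 ∧ 1 ≤ |z.re|)})
    (hsq2 : ∀ z : ℂ, (sq z) ^ 2 = (z - 1) / (z + 1))
    (hsqim : ∀ z : ℂ, ¬(z.im = 0 ∧ 1 ≤ |z.re|) → 0 < (sq z).im) :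
    ∃ C R : ℝ, ∀ z : ℂ, R ≤ ‖z‖ →
      (0 < z.im → ‖1 / (1 - sq z) - z‖ ≤ C) ∧
      (z.im < 0 → ‖1 / (1 - sq z)‖ ≤ C) := by
  refine ⟨3, 9, fun z hz => ?_⟩
  set s := sq z with hs
  have habs1 : ‖z‖ ≤ ‖z + 1‖ + 1 := by
    calc ‖z‖ = ‖(z + 1) + (-1)‖ := by ring_nf
    _ ≤ ‖z + 1‖ + ‖(-1 : ℂ)‖ := norm_add_le _ _
    _ = ‖z + 1‖ + 1 := by simp
  have hz1 : (8 : ℝ) ≤ ‖z + 1‖ := by linarith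
  have hzne : z + 1 ≠ 0 := by
    intro h
    rw [h] at hz1
    simp at hz1
    linarith
  have h2 : s ^ 2 * (z + 1) = z - 1 := by
    have h := hsq2 z
    rw [← hs] at h
    rw [h, div_mul_cancel₀ _ hzne]
  have hkey : (1 - s) * (1 + s) * (z + 1) = 2 := by linear_combination -h2
  have h1s : (1 : ℂ) - s ≠ 0 := by
    intro h
    rw [h] at hkey
    simp at hkey
  have habsprod : ‖1 - s‖ * ‖1 + s‖ * ‖z + 1‖ = 2 := by
    rw [← norm_mul, ← norm_mul, hkey]
    simp
  have hApos : (0 : ℝ) < ‖z + 1‖ := by linarith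
  have hw : 1 / (1 - s) = (1 + s) * (z + 1) / 2 := by
    field_simp
    linear_combination -hkey
  -- imaginary part / sign analysis
  constructor
  · intro him
    have hoff : ¬(z.im = 0 ∧ 1 ≤ |z.re|) := by
      intro ⟨h1, _⟩; linarith
    have hsim : 0 < s.im := hsqim z hoff
    have hN : (0 : ℝ) < Complex.normSq (z + 1) := by
      rw [Complex.normSq_pos]; exact hzne
    have heqim : 2 * s.re * s.im * Complex.normSq (z + 1) = 2 * z.im := by
      have h := congrArg Complex.im (hsq2 z)
      rw [← hs, Complex.div_im] at h
      simp [pow_two, Complex.mul_im] at h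
      field_simp at h
      nlinarith [h]
    have hre : 0 < s.re := by nlinarith [mul_pos hsim hN]
    have h1plus : (1 : ℝ) ≤ ‖1 + s‖ := by
      have : (1 + s).re = 1 + s.re := by simp
      calc (1 : ℝ) ≤ 1 + s.re := by linarith
      _ ≤ |(1 + s).re| := by rw [this]; exact le_abs_self _
      _ ≤ ‖1 + s‖ := Complex.abs_re_le_norm _
    have hsmall : ‖1 - s‖ ≤ 2 / ‖z + 1‖ := by
      rw [le_div_iff₀ hApos]
      nlinarith [norm_nonneg (1 - s), norm_nonneg (1 + s)]
    rw [hw]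
    have heq : (1 + s) * (z + 1) / 2 - z = 1 + (s - 1) * (z + 1) / 2 := by ring
    rw [heq]
    have hbound : ‖(s - 1) * (z + 1) / 2‖ ≤ 1 := by
      have : ‖(s - 1) * (z + 1) / 2‖ = ‖1 - s‖ * ‖z + 1‖ / 2 := by
        rw [norm_div, norm_mul]
        rw [← norm_neg (s - 1)]
        simp [neg_sub]
      rw [this]
      calc ‖1 - s‖ * ‖z + 1‖ / 2
          ≤ (2 / ‖z + 1‖) * ‖z + 1‖ / 2 := by
            apply div_le_div_of_nonneg_right _ (by norm_num)
            exact mul_le_mul_of_nonneg_right hsmall (le_of_lt hApos)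
      _ = 1 := by rw [div_mul_cancel₀ _ hApos.ne']; norm_num
    calc ‖(1 : ℂ) + (s - 1) * (z + 1) / 2‖ ≤ ‖(1 : ℂ)‖ + ‖(s - 1) * (z + 1) / 2‖ :=
          norm_add_le _ _
    _ ≤ 1 + 1 := by rw [norm_one]; linarith
    _ ≤ 3 := by norm_num
  · intro him
    have hoff : ¬(z.im = 0 ∧ 1 ≤ |z.re|) := by
      intro ⟨h1, _⟩; linarith
    have hsim : 0 < s.im := hsqim z hoff
    have hN : (0 : ℝ) < Complex.normSq (z + 1) := by
      rw [Complex.normSq_pos]; exact hzne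
    have heqim : 2 * s.re * s.im * Complex.normSq (z + 1) = 2 * z.im := by
      have h := congrArg Complex.im (hsq2 z)
      rw [← hs, Complex.div_im] at h
      simp [pow_two, Complex.mul_im] at h
      field_simp at h
      nlinarith [h]
    have hre : s.re < 0 := by nlinarith [mul_pos hsim hN]
    have h1minus : (1 : ℝ) ≤ ‖1 - s‖ := by
      have : (1 - s).re = 1 - s.re := by simp
      calc (1 : ℝ) ≤ 1 - s.re := by linarith
      _ ≤ |(1 - s).re| := by rw [this]; exact le_abs_self _
      _ ≤ ‖1 - s‖ := Complex.abs_re_le_norm _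
    have hsmall : ‖1 + s‖ ≤ 2 / ‖z + 1‖ := by
      rw [le_div_iff₀ hApos]
      nlinarith [norm_nonneg (1 - s), norm_nonneg (1 + s)]
    rw [hw]
    calc ‖(1 + s) * (z + 1) / 2‖ = ‖1 + s‖ * ‖z + 1‖ / 2 := by
          rw [norm_div, norm_mul]; simp
    _ ≤ (2 / ‖z + 1‖) * ‖z + 1‖ / 2 := by
          apply div_le_div_of_nonneg_right _ (by norm_num)
          exact mul_le_mul_of_nonneg_right hsmall (le_of_lt hApos)
    _ = 1 := by rw [div_mul_cancel₀ _ hApos.ne']; norm_num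
    _ ≤ 3 := by norm_num
end
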